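/- Let d ≥ 2 be an integer; set C_star = (1/d)·((d+1)/2)^{(d+1)/d} and η_star = 2/(d+1), and for C > 0 define ψ_C(η) = η^{1−1/d} + C(1−η)² on [0,1]. Then: (i) if 0 < C < C_star, then ψ_C(η) > ψ_C(0) for all η ∈ (0,1], so that η = 0 is the unique minimizer of ψ_C on [0,1]; (ii) if C = C_star, then ψ_C(η_star) = ψ_C(0) = C_star; (iii) if C > C_star, then there exists η ∈ (0,1] with ψ_C(η) < ψ_C(0), and every minimizer η_c of ψ_C over [0,1] satisfies η_c ≥ η_star. -/

import Mathlib

noncomputable section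

/-- `C_star = (1/d)((d+1)/2)^{(d+1)/d}`. -/
def Cstar (d : ℕ) : ℝ := (1/(d:ℝ)) * (((d:ℝ)+1)/2) ^ (((d:ℝ)+1)/(d:ℝ))

/-- `η_star = 2/(d+1)`. -/
def etaStar (d : ℕ) : ℝ := 2/((d:ℝ)+1)

/-- `ψ_C(η) = η^{1-1/d} + C(1-η)²`. -/
def psiC (d : ℕ) (C η : ℝ) : ℝ := η ^ (1 - 1/(d:ℝ)) + C * (1-η)^2

lemma bern (x : ℝ) (hx : -1 < x) : ∀ n : ℕ, 0 < 1 - (n:ℝ)*x → (1 - (n:ℝ)*x)*(1+x)^n ≤ 1 := by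
  intro n
  induction n with
  | zero => simp
  | succ m ih =>
    intro h
    push_cast at h
    have hx1 : 0 < 1 + x := by linarith
    have hm : 0 < 1 - (m:ℝ)*x := by
      rcases le_or_gt x 0 with h' | h'
      · nlinarith [Nat.cast_nonneg (α := ℝ) m]
      · nlinarith
    have hpow : 0 < (1+x)^m := pow_pos hx1 m
    have step : (1 - ((m:ℝ)+1)*x)*(1+x)^(m+1) ≤ (1 - (m:ℝ)*x)*(1+x)^m := by
      have e : (1 - ((m:ℝ)+1)*x)*(1+x)^(m+1) = ((1 - (m:ℝ)*x) - ((m:ℝ)+1)*x^2)*(1+x)^m := by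
        rw [pow_succ]; ring
      rw [e]
      have h2 : (1 - (m:ℝ)*x) - ((m:ℝ)+1)*x^2 ≤ 1 - (m:ℝ)*x := by
        nlinarith [sq_nonneg x, Nat.cast_nonneg (α := ℝ) m]
      exact mul_le_mul_of_nonneg_right h2 hpow.le
    push_cast
    calc (1 - ((m:ℝ)+1)*x)*(1+x)^(m+1) ≤ (1 - (m:ℝ)*x)*(1+x)^m := step
      _ ≤ 1 := ih hm

lemma bern_strict (x : ℝ) (hx : -1 < x) (hx0 : x ≠ 0) (n : ℕ) (hn : n ≠ 0)
    (h : 0 < 1 - (n:ℝ)*x) : (1 - (n:ℝ)*x)*(1+x)^n < 1 := by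
  obtain ⟨m, rfl⟩ := Nat.exists_eq_succ_of_ne_zero hn
  push_cast at h ⊢
  have hx1 : 0 < 1 + x := by linarith
  have hm : 0 < 1 - (m:ℝ)*x := by
    rcases le_or_gt x 0 with h' | h'
    · nlinarith [Nat.cast_nonneg (α := ℝ) m]
    · nlinarith
  have hpow : 0 < (1+x)^m := pow_pos hx1 m
  have hx2 : 0 < x^2 := by positivity
  have step : (1 - ((m:ℝ)+1)*x)*(1+x)^(m+1) < (1 - (m:ℝ)*x)*(1+x)^m := by
    have e : (1 - ((m:ℝ)+1)*x)*(1+x)^(m+1) = ((1 - (m:ℝ)*x) - ((m:ℝ)+1)*x^2)*(1+x)^m := by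
      rw [pow_succ]; ring
    rw [e]
    have h2 : (1 - (m:ℝ)*x) - ((m:ℝ)+1)*x^2 < 1 - (m:ℝ)*x := by
      nlinarith [Nat.cast_nonneg (α := ℝ) m]
    exact mul_lt_mul_of_pos_right h2 hpow
  calc (1 - ((m:ℝ)+1)*x)*(1+x)^(m+1) < (1 - (m:ℝ)*x)*(1+x)^m := step
    _ ≤ 1 := bern x hx m hm

lemma Cstar_pos (d : ℕ) (hd : 2 ≤ d) : 0 < Cstar d := by
  have hD : (0:ℝ) < d := by
    have : (0:ℕ) < d := by omega
    exact_mod_cast this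
  unfold Cstar
  positivity

lemma Cstar_pow (d : ℕ) (hd : 2 ≤ d) :
    (Cstar d)^d * (d:ℝ)^d = (((d:ℝ)+1)/2)^(d+1) := by
  have hD : (0:ℝ) < d := by positivity
  have hD' : (0:ℝ) < (d:ℝ) := by
    have : (2:ℝ) ≤ d := by exact_mod_cast hd
    linarith
  have hB : (0:ℝ) < ((d:ℝ)+1)/2 := by positivity
  unfold Cstar
  rw [mul_pow]
  have h1 : ((((d:ℝ)+1)/2) ^ (((d:ℝ)+1)/(d:ℝ)))^d = (((d:ℝ)+1)/2)^(d+1) := by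
    rw [← Real.rpow_natCast ((((d:ℝ)+1)/2) ^ (((d:ℝ)+1)/(d:ℝ))) d, ← Real.rpow_mul hB.le]
    have e : (((d:ℝ)+1)/(d:ℝ)) * (d:ℝ) = ((d+1 : ℕ):ℝ) := by
      push_cast
      field_simp
    rw [e, Real.rpow_natCast]
  rw [h1]
  have hDd : ((d:ℝ))^d ≠ 0 := by positivity
  field_simp
  ring_nf
  rw [← mul_pow, mul_inv_cancel₀ hD'.ne', one_pow]

lemma key_identity (d : ℕ) (hd : 2 ≤ d) (η : ℝ) :
    (Cstar d)^d * (η * (2-η)^d) =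
      (1 - (d:ℝ) * ((2-((d:ℝ)+1)*η)/(2*(d:ℝ)))) *
        (1 + (2-((d:ℝ)+1)*η)/(2*(d:ℝ)))^d := by
  have hD' : (0:ℝ) < (d:ℝ) := by
    have : (2:ℝ) ≤ d := by exact_mod_cast hd
    linarith
  have e1 : 1 - (d:ℝ)*((2-((d:ℝ)+1)*η)/(2*(d:ℝ))) = ((d:ℝ)+1)*η/2 := by
    field_simp; ring
  have e2 : 1 + (2-((d:ℝ)+1)*η)/(2*(d:ℝ)) = (((d:ℝ)+1)*(2-η))/(2*(d:ℝ)) := by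
    field_simp; ring
  rw [e1, e2]
  have hCp : (Cstar d)^d = (((d:ℝ)+1)/2)^(d+1) / (d:ℝ)^d := by
    rw [eq_div_iff (by positivity)]; exact Cstar_pow d hd
  rw [hCp, div_pow (((d:ℝ)+1)*(2-η)) (2*(d:ℝ)) d, mul_pow ((d:ℝ)+1) (2-η) d,
    mul_pow 2 (d:ℝ) d, div_pow ((d:ℝ)+1) 2 (d+1), pow_succ ((d:ℝ)+1) d, pow_succ (2:ℝ) d]
  field_simp

lemma key_le (d : ℕ) (hd : 2 ≤ d) {η : ℝ} (hη0 : 0 < η) (hη1 : η ≤ 1) :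
    (Cstar d)^d * (η * (2-η)^d) ≤ 1 := by
  have hD' : (0:ℝ) < (d:ℝ) := by
    have : (2:ℝ) ≤ d := by exact_mod_cast hd
    linarith
  rw [key_identity d hd η]
  set x := (2-((d:ℝ)+1)*η)/(2*(d:ℝ)) with hxdef
  have hx : -1 < x := by
    rw [hxdef, lt_div_iff₀ (by positivity)]
    nlinarith
  have e1 : 1 - (d:ℝ)*x = ((d:ℝ)+1)*η/2 := by
    rw [hxdef]; field_simp; ring
  have h1 : 0 < 1 - (d:ℝ)*x := by rw [e1]; positivity
  exact bern x hx d h1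

lemma key_lt (d : ℕ) (hd : 2 ≤ d) {η : ℝ} (hη0 : 0 < η) (hη1 : η ≤ 1)
    (hne : η ≠ etaStar d) :
    (Cstar d)^d * (η * (2-η)^d) < 1 := by
  have hD' : (0:ℝ) < (d:ℝ) := by
    have : (2:ℝ) ≤ d := by exact_mod_cast hd
    linarith
  rw [key_identity d hd η]
  set x := (2-((d:ℝ)+1)*η)/(2*(d:ℝ)) with hxdef
  have hx : -1 < x := by
    rw [hxdef, lt_div_iff₀ (by positivity)]
    nlinarith
  have e1 : 1 - (d:ℝ)*x = ((d:ℝ)+1)*η/2 := by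
    rw [hxdef]; field_simp; ring
  have h1 : 0 < 1 - (d:ℝ)*x := by rw [e1]; positivity
  have hx0 : x ≠ 0 := by
    intro h0
    apply hne
    have h2 : 2 - ((d:ℝ)+1)*η = 0 := by
      have := h0
      rw [hxdef, div_eq_zero_iff] at this
      rcases this with h | h
      · exact h
      · exfalso; nlinarith
    unfold etaStar
    rw [eq_div_iff (by positivity)]
    linarith
  exact bern_strict x hx hx0 d (by omega) h1

lemma key_eq (d : ℕ) (hd : 2 ≤ d) :
    (Cstar d)^d * (etaStar d * (2 - etaStar d)^d) = 1 := by
  have hD' : (0:ℝ) < (d:ℝ) := by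
    have : (2:ℝ) ≤ d := by exact_mod_cast hd
    linarith
  rw [key_identity d hd (etaStar d)]
  have h2 : 2 - ((d:ℝ)+1)*(etaStar d) = 0 := by
    unfold etaStar; field_simp; ring
  rw [h2]
  simp

lemma pow_eta (d : ℕ) (hd : 2 ≤ d) {η : ℝ} (hη0 : 0 < η) :
    (η ^ (1 - 1/(d:ℝ)))^d = η^(d-1) := by
  have hD' : (0:ℝ) < (d:ℝ) := by
    have : (2:ℝ) ≤ d := by exact_mod_cast hd
    linarith
  rw [← Real.rpow_natCast (η ^ (1 - 1/(d:ℝ))) d, ← Real.rpow_mul hη0.le]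
  have e : (1 - 1/(d:ℝ)) * (d:ℝ) = ((d-1 : ℕ):ℝ) := by
    have : ((d-1 : ℕ):ℝ) = (d:ℝ) - 1 := by
      have h1 : 1 ≤ d := by omega
      push_cast [Nat.cast_sub h1]
      ring
    rw [this]
    field_simp
  rw [e, Real.rpow_natCast]

lemma rpow_key_le (d : ℕ) (hd : 2 ≤ d) {η : ℝ} (hη0 : 0 < η) (hη1 : η ≤ 1) :
    Cstar d * (η * (2-η)) ≤ η ^ (1 - 1/(d:ℝ)) := by
  have hdn : d ≠ 0 := by omega
  have h2η : 0 < 2 - η := by linarith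
  have ha : 0 ≤ Cstar d * (η * (2-η)) := by
    have := Cstar_pos d hd; positivity
  have hb : 0 ≤ η ^ (1 - 1/(d:ℝ)) := Real.rpow_nonneg hη0.le _
  refine le_of_pow_le_pow_left₀ hdn hb ?_
  rw [pow_eta d hd hη0]
  have had : (Cstar d * (η * (2-η)))^d = η^(d-1) * ((Cstar d)^d * (η * (2-η)^d)) := by
    have hηd : η^d = η^(d-1)*η := by
      rw [← pow_succ]
      congr 1
      omega
    rw [mul_pow, mul_pow, hηd]
    ring
  rw [had]
  calc η^(d-1) * ((Cstar d)^d * (η * (2-η)^d)) ≤ η^(d-1) * 1 := by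
        exact mul_le_mul_of_nonneg_left (key_le d hd hη0 hη1) (by positivity)
    _ = η^(d-1) := by ring
  
lemma rpow_key_lt (d : ℕ) (hd : 2 ≤ d) {η : ℝ} (hη0 : 0 < η) (hη1 : η ≤ 1)
    (hne : η ≠ etaStar d) :
    Cstar d * (η * (2-η)) < η ^ (1 - 1/(d:ℝ)) := by
  have hdn : d ≠ 0 := by omega
  have h2η : 0 < 2 - η := by linarith
  have hb : 0 ≤ η ^ (1 - 1/(d:ℝ)) := Real.rpow_nonneg hη0.le _
  refine lt_of_pow_lt_pow_left₀ d hb ?_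
  rw [pow_eta d hd hη0]
  have had : (Cstar d * (η * (2-η)))^d = η^(d-1) * ((Cstar d)^d * (η * (2-η)^d)) := by
    have hηd : η^d = η^(d-1)*η := by
      rw [← pow_succ]
      congr 1
      omega
    rw [mul_pow, mul_pow, hηd]
    ring
  rw [had]
  calc η^(d-1) * ((Cstar d)^d * (η * (2-η)^d)) < η^(d-1) * 1 := by
        exact mul_lt_mul_of_pos_left (key_lt d hd hη0 hη1 hne) (by positivity)
    _ = η^(d-1) := by ring

lemma etaStar_pos (d : ℕ) (hd : 2 ≤ d) : 0 < etaStar d := by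
  have hD' : (0:ℝ) < (d:ℝ) := by
    have : (2:ℝ) ≤ d := by exact_mod_cast hd
    linarith
  unfold etaStar; positivity

lemma etaStar_le_one (d : ℕ) (hd : 2 ≤ d) : etaStar d ≤ 1 := by
  have hD' : (2:ℝ) ≤ (d:ℝ) := by exact_mod_cast hd
  unfold etaStar
  rw [div_le_one (by linarith)]
  linarith

lemma rpow_key_eq (d : ℕ) (hd : 2 ≤ d) :
    Cstar d * (etaStar d * (2 - etaStar d)) = (etaStar d) ^ (1 - 1/(d:ℝ)) := by
  have hdn : d ≠ 0 := by omega
  have hη0 := etaStar_pos d hd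
  have hη1 := etaStar_le_one d hd
  have h2η : 0 < 2 - etaStar d := by linarith
  have ha : 0 ≤ Cstar d * (etaStar d * (2-etaStar d)) := by
    have := Cstar_pos d hd; positivity
  have hb : 0 ≤ (etaStar d) ^ (1 - 1/(d:ℝ)) := Real.rpow_nonneg hη0.le _
  have had : (Cstar d * (etaStar d * (2-etaStar d)))^d
      = (etaStar d)^(d-1) * ((Cstar d)^d * (etaStar d * (2-etaStar d)^d)) := by
    have hηd : (etaStar d)^d = (etaStar d)^(d-1)*(etaStar d) := by
      rw [← pow_succ]
      congr 1
      omega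
    rw [mul_pow, mul_pow, hηd]
    ring
  have hpow : (Cstar d * (etaStar d * (2-etaStar d)))^d = ((etaStar d) ^ (1 - 1/(d:ℝ)))^d := by
    rw [pow_eta d hd hη0, had, key_eq d hd]
    ring
  exact le_antisymm (le_of_pow_le_pow_left₀ hdn hb (le_of_eq hpow))
    (le_of_pow_le_pow_left₀ hdn ha (ge_of_eq hpow))

/-- Minimization of `ψ_C` on `[0,1]`: (i) for `C < C_star`, `η = 0` is the unique
minimizer; (ii) for `C = C_star`, `ψ_C(η_star) = ψ_C(0) = C_star`; (iii) for
`C > C_star` some `η ∈ (0,1]` does better than `0`, and every minimizer is `≥ η_star`. -/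
theorem psiC_minimization (d : ℕ) (hd : 2 ≤ d) (C : ℝ) (hC : 0 < C) :
    (C < Cstar d → ∀ η ∈ Set.Ioc (0:ℝ) 1, psiC d C 0 < psiC d C η) ∧
    (C = Cstar d → psiC d C (etaStar d) = psiC d C 0 ∧ psiC d C 0 = Cstar d) ∧
    (Cstar d < C →
      (∃ η ∈ Set.Ioc (0:ℝ) 1, psiC d C η < psiC d C 0) ∧
      ∀ ηc ∈ Set.Icc (0:ℝ) 1,
        (∀ η ∈ Set.Icc (0:ℝ) 1, psiC d C ηc ≤ psiC d C η) → etaStar d ≤ ηc) := by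
  have hD : (2:ℝ) ≤ (d:ℝ) := by exact_mod_cast hd
  have hD0 : (0:ℝ) < (d:ℝ) := by linarith
  have hane : (1:ℝ) - 1/(d:ℝ) ≠ 0 := by
    have : 1/(d:ℝ) ≤ 1/2 := by
      rw [div_le_div_iff₀ hD0 (by norm_num)]; linarith
    intro h; rw [sub_eq_zero] at h; rw [← h] at this; norm_num at this
  have psi0 : ∀ C' : ℝ, psiC d C' 0 = C' := by
    intro C'
    unfold psiC
    rw [Real.zero_rpow hane]
    ring
  have psiform : ∀ C' η : ℝ, psiC d C' η = η ^ (1 - 1/(d:ℝ)) - C'*(η*(2-η)) + C' := by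
    intro C' η
    unfold psiC
    ring
  have hs0 := etaStar_pos d hd
  have hs1 := etaStar_le_one d hd
  have heq := rpow_key_eq d hd
  refine ⟨?_, ?_, ?_⟩
  · -- (i)
    intro hCC η hη
    obtain ⟨hη0, hη1⟩ := hη
    rw [psi0, psiform]
    have h1 := rpow_key_le d hd hη0 hη1
    have h2 : 0 < η*(2-η) := by nlinarith
    nlinarith
  · -- (ii)
    intro hCeq
    subst hCeq
    constructor
    · rw [psi0, psiform]
      linarith [heq]
    · exact psi0 _
  · -- (iii)
    intro hCC
    have hq : 0 < etaStar d * (2 - etaStar d) := by nlinarith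
    constructor
    · refine ⟨etaStar d, ⟨hs0, hs1⟩, ?_⟩
      rw [psi0, psiform]
      nlinarith
    · intro ηc hc hmin
      obtain ⟨hc0, hc1⟩ := hc
      by_contra hlt
      push_neg at hlt
      have hstar_mem : etaStar d ∈ Set.Icc (0:ℝ) 1 := ⟨hs0.le, hs1⟩
      have h1 : psiC d C ηc ≤ psiC d C (etaStar d) := hmin _ hstar_mem
      have hcontra : psiC d C (etaStar d) < psiC d C ηc := by
        rcases eq_or_lt_of_le hc0 with h0 | h0
        · rw [← h0, psi0, psiform]
          nlinarith
        · have hne : ηc ≠ etaStar d := ne_of_lt hlt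
          have hk := rpow_key_lt d hd h0 hc1 hne
          have hqlt : ηc*(2-ηc) < etaStar d * (2 - etaStar d) := by nlinarith
          have hprod : 0 < (C - Cstar d) * (etaStar d * (2 - etaStar d) - ηc*(2-ηc)) :=
            mul_pos (by linarith) (by linarith)
          rw [psiform, psiform]
          nlinarith
      linarith
  
end
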